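/- In the setting of the preceding gauge-inversion statement, for any δl ∈ V* and δl2 ∈ ℝ there exists a unique choice of first-order gauge fields (δλ, δW, δZ) with n2·δW + δZ(n) = 0 such that the transformed perturbations vanish: δl' = 0 and δl2' = 0. -/
import Mathlib


/-- The gauge δl' = δl2' = 0 can always be reached: for any first-order rigging
perturbations (δl, δl2) there exist unique constrained first-order gauge fields
(δλ, δW, δZ) with δl + δλ·l + δZ = 0 and δl2 + 2 l2 δλ + 2 δW = 0. -/
theorem stmt_6
    (V : Type*) [AddCommGroup V] [Module ℝ V] [FiniteDimensional ℝ V]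
    (h : V →ₗ[ℝ] V →ₗ[ℝ] ℝ) (hsymm : ∀ X Y : V, h X Y = h Y X)
    (l : Module.Dual ℝ V) (l2 : ℝ)
    (P : Module.Dual ℝ V →ₗ[ℝ] Module.Dual ℝ V →ₗ[ℝ] ℝ)
    (Psymm : ∀ ω χ : Module.Dual ℝ V, P ω χ = P χ ω)
    (n : V) (n2 : ℝ)
    (c1 : ∀ (ω : Module.Dual ℝ V) (X : V), P ω (h X) + ω n * l X = ω X)
    (c2 : ∀ ω : Module.Dual ℝ V, P ω l + l2 * ω n = 0)
    (c3 : l n + n2 * l2 = 1)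
    (c4 : ∀ X : V, h n X + n2 * l X = 0)
    (δl : Module.Dual ℝ V) (δl2 : ℝ) :
    ∃! p : ℝ × ℝ × Module.Dual ℝ V,
      (n2 * p.2.1 + p.2.2 n = 0) ∧
      (δl + p.1 • l + p.2.2 = 0) ∧
      (δl2 + 2 * l2 * p.1 + 2 * p.2.1 = 0) := by
  have c3' := c3
  refine ⟨(-(δl n) - n2 * δl2 / 2,
      -(δl2 + 2 * l2 * (-(δl n) - n2 * δl2 / 2)) / 2,
      -δl - (-(δl n) - n2 * δl2 / 2) • l), ⟨?_, ?_, ?_⟩, ?_⟩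
  · simp only [LinearMap.sub_apply, LinearMap.neg_apply, LinearMap.smul_apply,
      smul_eq_mul]
    linear_combination (-(-(δl n) - n2 * δl2 / 2)) * c3
  · ext X; simp; try ring
  · ring
  · rintro ⟨a, b, Z⟩ ⟨hc, h1, h2⟩
    have hZ : Z = -δl - a • l := by
      ext X
      have := congrArg (fun f => f X) h1
      simp at this ⊢
      linarith
    have hb : b = -(δl2 + 2 * l2 * a) / 2 := by linarith
    have han : Z n = -(δl n) - a * l n := by rw [hZ]; simp
    have ha : a = -(δl n) - n2 * δl2 / 2 := by
      rw [hb, han] at hc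
      linear_combination -hc - a * c3
    subst ha; rw [hb, hZ]
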